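/- Let n ≥ 1 and let ρ : ℝ^n → [0,∞) satisfy A := ∑_{j∈ℤ} (ess sup_{2^j ≤ |x| < 2^{j+1}} ρ(x))² < ∞. Then there is a constant C depending only on n such that for every measurable h : ℝ^n × ℝ → ℂ, ∫_ℝ ∫_{ℝ^n} ρ(x)² |x|^{−1} |h(x,t)|² dx dt ≤ C A · sup_{R>0} (1/R) ∫_{|x|<R} ∫_ℝ |h(x,t)|² dt dx. -/

import Mathlib

open MeasureTheory ENNReal NNReal

/-- The squared essential suprema of `ρ` over the dyadic annuli `{2^j ≤ |x| < 2^{j+1}}`,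
summed over `j ∈ ℤ`. -/
noncomputable def dyadicSupSum (n : ℕ) (ρ : EuclideanSpace ℝ (Fin n) → ℝ) : ℝ≥0∞ :=
  ∑' j : ℤ,
    (essSup (fun x => ENNReal.ofReal (ρ x))
        (volume.restrict
          {x : EuclideanSpace ℝ (Fin n) | (2 : ℝ) ^ j ≤ ‖x‖ ∧ ‖x‖ < (2 : ℝ) ^ (j + 1)})) ^ 2

theorem local_smoothing_to_weighted
    (n : ℕ) (hn : 1 ≤ n) :
    ∃ C : ℝ≥0, 0 < C ∧
      ∀ ρ : EuclideanSpace ℝ (Fin n) → ℝ, (∀ x, 0 ≤ ρ x) →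
        dyadicSupSum n ρ ≠ ⊤ →
        ∀ h : EuclideanSpace ℝ (Fin n) → ℝ → ℂ, Measurable (Function.uncurry h) →
          (∫⁻ t : ℝ, ∫⁻ x : EuclideanSpace ℝ (Fin n),
              ENNReal.ofReal (ρ x ^ 2 * ‖x‖⁻¹) * (‖h x t‖₊ : ℝ≥0∞) ^ 2)
            ≤ C * dyadicSupSum n ρ *
              ⨆ (R : ℝ) (_ : 0 < R),
                (ENNReal.ofReal R)⁻¹ *
                  ∫⁻ x in {x : EuclideanSpace ℝ (Fin n) | ‖x‖ < R},
                    ∫⁻ t : ℝ, (‖h x t‖₊ : ℝ≥0∞) ^ 2 := by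
  classical
  refine ⟨2, two_pos, ?_⟩
  intro ρ hρ hA h hmeas
  haveI : Nonempty (Fin n) := Fin.pos_iff_nonempty.mp hn
  haveI : Nontrivial (EuclideanSpace ℝ (Fin n)) := inferInstance
  -- annuli
  set A : ℤ → Set (EuclideanSpace ℝ (Fin n)) := fun j =>
    {x : EuclideanSpace ℝ (Fin n) | (2 : ℝ) ^ j ≤ ‖x‖ ∧ ‖x‖ < (2 : ℝ) ^ (j + 1)} with hAdef
  set M : ℤ → ℝ≥0∞ := fun j =>
    essSup (fun x => ENNReal.ofReal (ρ x)) (volume.restrict (A j)) with hMdef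
  have hAS : dyadicSupSum n ρ = ∑' j : ℤ, (M j) ^ 2 := rfl
  set S : ℝ≥0∞ := ⨆ (R : ℝ) (_ : 0 < R),
      (ENNReal.ofReal R)⁻¹ *
        ∫⁻ x in {x : EuclideanSpace ℝ (Fin n) | ‖x‖ < R},
          ∫⁻ t : ℝ, (‖h x t‖₊ : ℝ≥0∞) ^ 2 with hSdef
  set G : EuclideanSpace ℝ (Fin n) → ℝ → ℝ≥0∞ := fun x t => (‖h x t‖₊ : ℝ≥0∞) ^ 2 with hGdef
  have hGmeas : Measurable (Function.uncurry G) := by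
    have : Function.uncurry G = fun p : EuclideanSpace ℝ (Fin n) × ℝ =>
        (‖Function.uncurry h p‖₊ : ℝ≥0∞) ^ 2 := rfl
    rw [this]
    exact hmeas.nnnorm.coe_nnreal_ennreal.pow_const 2
  have hAmeas : ∀ j, MeasurableSet (A j) := by
    intro j
    exact (measurableSet_le measurable_const measurable_norm).inter
      (measurableSet_lt measurable_norm measurable_const)
  have hMne : ∀ j, M j ≠ ⊤ := by
    intro j
    have hA' : (∑' j : ℤ, (M j) ^ 2) ≠ ⊤ := hA
    have h2 : (M j) ^ 2 ≠ ⊤ := ENNReal.ne_top_of_tsum_ne_top hA' j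
    intro hc
    rw [hc] at h2
    simp at h2
  -- the constant on each annulus
  set c : ℤ → ℝ≥0∞ := fun j => M j ^ 2 * ENNReal.ofReal ((2 : ℝ) ^ (-j)) with hcdef
  have hcne : ∀ j, c j ≠ ⊤ := fun j =>
    ENNReal.mul_ne_top (pow_ne_top (hMne j)) ENNReal.ofReal_ne_top
  -- a.e. union covering
  have hcover : ∀ᵐ x : EuclideanSpace ℝ (Fin n) ∂volume, x ∈ ⋃ j : ℤ, A j := by
    have h0 : volume ({(0 : EuclideanSpace ℝ (Fin n))} : Set (EuclideanSpace ℝ (Fin n))) = 0 :=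
      measure_singleton 0
    filter_upwards [measure_eq_zero_iff_ae_notMem.mp h0] with x hx
    have hx0 : x ≠ 0 := by simpa using hx
    have hxn : (0 : ℝ) < ‖x‖ := norm_pos_iff.mpr hx0
    obtain ⟨j, hj1, hj2⟩ := exists_mem_Ico_zpow hxn one_lt_two
    exact Set.mem_iUnion.mpr ⟨j, hj1, hj2⟩
  -- pointwise a.e. bound of the weight on each annulus
  have hweight : ∀ j, ∀ᵐ x ∂(volume.restrict (A j)),
      ENNReal.ofReal (ρ x ^ 2 * ‖x‖⁻¹) ≤ c j := by
    intro j
    filter_upwards [ENNReal.ae_le_essSup (μ := volume.restrict (A j))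
      (fun x => ENNReal.ofReal (ρ x)), ae_restrict_mem (hAmeas j)] with x hx hxA
    have hxn : (0 : ℝ) < ‖x‖ := lt_of_lt_of_le (zpow_pos two_pos j) hxA.1
    have hinv : ‖x‖⁻¹ ≤ (2 : ℝ) ^ (-j) := by
      rw [zpow_neg]
      exact inv_anti₀ (zpow_pos two_pos j) hxA.1
    calc ENNReal.ofReal (ρ x ^ 2 * ‖x‖⁻¹)
        = ENNReal.ofReal (ρ x) ^ 2 * ENNReal.ofReal (‖x‖⁻¹) := by
          rw [ENNReal.ofReal_mul (by positivity), ← ENNReal.ofReal_pow (hρ x)]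
      _ ≤ M j ^ 2 * ENNReal.ofReal ((2 : ℝ) ^ (-j)) := by
          exact mul_le_mul' (pow_le_pow_left' hx 2) (ENNReal.ofReal_le_ofReal hinv)
  -- the local-smoothing bound on each ball
  have hball : ∀ j : ℤ,
      (∫⁻ x in A j, ∫⁻ t, G x t) ≤ ENNReal.ofReal ((2 : ℝ) ^ (j + 1)) * S := by
    intro j
    have hsub : A j ⊆ {x : EuclideanSpace ℝ (Fin n) | ‖x‖ < (2 : ℝ) ^ (j + 1)} :=
      fun x hx => hx.2
    have h1 : (∫⁻ x in A j, ∫⁻ t, G x t) ≤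
        ∫⁻ x in {x : EuclideanSpace ℝ (Fin n) | ‖x‖ < (2 : ℝ) ^ (j + 1)}, ∫⁻ t, G x t :=
      lintegral_mono' (Measure.restrict_mono hsub le_rfl) le_rfl
    have hRpos : (0 : ℝ) < (2 : ℝ) ^ (j + 1) := zpow_pos two_pos _
    have hterm : (ENNReal.ofReal ((2 : ℝ) ^ (j + 1)))⁻¹ *
        (∫⁻ x in {x : EuclideanSpace ℝ (Fin n) | ‖x‖ < (2 : ℝ) ^ (j + 1)},
          ∫⁻ t, G x t) ≤ S := by
      rw [hSdef]
      exact le_iSup₂_of_le ((2 : ℝ) ^ (j + 1)) hRpos le_rfl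
    have hR0 : ENNReal.ofReal ((2 : ℝ) ^ (j + 1)) ≠ 0 := by
      simp [ENNReal.ofReal_eq_zero, not_le, hRpos]
    have hRt : ENNReal.ofReal ((2 : ℝ) ^ (j + 1)) ≠ ⊤ := ENNReal.ofReal_ne_top
    calc (∫⁻ x in A j, ∫⁻ t, G x t)
        ≤ ∫⁻ x in {x : EuclideanSpace ℝ (Fin n) | ‖x‖ < (2 : ℝ) ^ (j + 1)}, ∫⁻ t, G x t := h1
      _ = ENNReal.ofReal ((2 : ℝ) ^ (j + 1)) *
          ((ENNReal.ofReal ((2 : ℝ) ^ (j + 1)))⁻¹ *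
            ∫⁻ x in {x : EuclideanSpace ℝ (Fin n) | ‖x‖ < (2 : ℝ) ^ (j + 1)},
              ∫⁻ t, G x t) := by
          rw [← mul_assoc, ENNReal.mul_inv_cancel hR0 hRt, one_mul]
      _ ≤ ENNReal.ofReal ((2 : ℝ) ^ (j + 1)) * S := mul_le_mul_right hterm _
  -- main chain
  have main : (∫⁻ t : ℝ, ∫⁻ x : EuclideanSpace ℝ (Fin n),
      ENNReal.ofReal (ρ x ^ 2 * ‖x‖⁻¹) * G x t)
      ≤ ∑' j : ℤ, c j * ∫⁻ t, ∫⁻ x in A j, G x t := by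
    have step1 : ∀ t : ℝ, (∫⁻ x : EuclideanSpace ℝ (Fin n),
        ENNReal.ofReal (ρ x ^ 2 * ‖x‖⁻¹) * G x t)
        ≤ ∑' j : ℤ, c j * ∫⁻ x in A j, G x t := by
      intro t
      have heq : (∫⁻ x : EuclideanSpace ℝ (Fin n),
          ENNReal.ofReal (ρ x ^ 2 * ‖x‖⁻¹) * G x t)
          = ∫⁻ x in ⋃ j : ℤ, A j, ENNReal.ofReal (ρ x ^ 2 * ‖x‖⁻¹) * G x t := by
        rw [Measure.restrict_eq_self_of_ae_mem hcover]
      rw [heq]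
      refine le_trans (lintegral_iUnion_le _ _) (ENNReal.tsum_le_tsum fun j => ?_)
      calc (∫⁻ x in A j, ENNReal.ofReal (ρ x ^ 2 * ‖x‖⁻¹) * G x t)
          ≤ ∫⁻ x in A j, c j * G x t :=
            lintegral_mono_ae ((hweight j).mono fun x hx => mul_le_mul_left hx _)
        _ = c j * ∫⁻ x in A j, G x t := lintegral_const_mul' _ _ (hcne j)
    calc (∫⁻ t : ℝ, ∫⁻ x : EuclideanSpace ℝ (Fin n),
        ENNReal.ofReal (ρ x ^ 2 * ‖x‖⁻¹) * G x t)
        ≤ ∫⁻ t : ℝ, ∑' j : ℤ, c j * ∫⁻ x in A j, G x t := lintegral_mono step1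
      _ = ∑' j : ℤ, ∫⁻ t : ℝ, c j * ∫⁻ x in A j, G x t := by
          refine lintegral_tsum fun j => ?_
          exact (((hGmeas.lintegral_prod_left').const_mul (c j))).aemeasurable
      _ = ∑' j : ℤ, c j * ∫⁻ t, ∫⁻ x in A j, G x t := by
          congr 1
          ext j
          exact lintegral_const_mul' _ _ (hcne j)
  -- swap the order of integration on each annulus
  have hswap : ∀ j : ℤ, (∫⁻ t, ∫⁻ x in A j, G x t) = ∫⁻ x in A j, ∫⁻ t, G x t := by
    intro j
    exact (lintegral_lintegral_swap (hGmeas.aemeasurable)).symm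
  have harith : ∀ j : ℤ, c j * (ENNReal.ofReal ((2 : ℝ) ^ (j + 1)) * S)
      = M j ^ 2 * (2 * S) := by
    intro j
    have key : ENNReal.ofReal ((2 : ℝ) ^ (-j)) * ENNReal.ofReal ((2 : ℝ) ^ (j + 1))
        = (2 : ℝ≥0∞) := by
      rw [← ENNReal.ofReal_mul (by positivity)]
      rw [← zpow_add₀ (two_ne_zero (α := ℝ))]
      norm_num
    calc c j * (ENNReal.ofReal ((2 : ℝ) ^ (j + 1)) * S)
        = M j ^ 2 * ((ENNReal.ofReal ((2 : ℝ) ^ (-j)) *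
            ENNReal.ofReal ((2 : ℝ) ^ (j + 1))) * S) := by
          rw [hcdef]; ring
      _ = M j ^ 2 * (2 * S) := by rw [key]
  calc (∫⁻ t : ℝ, ∫⁻ x : EuclideanSpace ℝ (Fin n),
      ENNReal.ofReal (ρ x ^ 2 * ‖x‖⁻¹) * (‖h x t‖₊ : ℝ≥0∞) ^ 2)
      ≤ ∑' j : ℤ, c j * ∫⁻ t, ∫⁻ x in A j, G x t := main
    _ ≤ ∑' j : ℤ, M j ^ 2 * (2 * S) := by
        refine ENNReal.tsum_le_tsum fun j => ?_
        rw [hswap j, ← harith j]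
        exact mul_le_mul_right (hball j) _
    _ = (∑' j : ℤ, M j ^ 2) * (2 * S) := ENNReal.tsum_mul_right
    _ = (2 : ℝ≥0) * dyadicSupSum n ρ * S := by
        rw [hAS]
        push_cast
        ring
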